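/- Let U be a finite set, let z be a nondegenerate nonnegative weight vector, let S ⊆ U with |S| ≥ 2, and let p ∈ S be a point of minimum norm in S, i.e., ℓ(p) ≤ ℓ(q) for all q ∈ S. Then f(S ∖ {p}) ≥ f(S) ≥ ℓ(p). -/

import Mathlib

open Finset

variable {α : Type*} [Fintype α] [DecidableEq α]

/-- `E` crosses `S` if both `S ∩ E` and `S \ E` are nonempty. -/
def Crosses (E S : Finset α) : Prop := (S ∩ E).Nonempty ∧ (S \ E).Nonempty

instance (E S : Finset α) : Decidable (Crosses E S) := by unfold Crosses; infer_instance

/-- The family of subsets of the ground set crossing `S`. -/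
def crossers (S : Finset α) : Finset (Finset α) := univ.filter (fun E => Crosses E S)

/-- `ℓ(p)`: total weight of the sets containing `p`. -/
def ell (z : Finset α → ℝ) (p : α) : ℝ := ∑ E ∈ univ.filter (fun E => p ∈ E), z E

lemma card_sdiff_lt_of_mem_crossers {E S : Finset α} (h : E ∈ crossers S) :
    (S \ E).card < S.card := by
  have h' : Crosses E S := (mem_filter.mp h).2
  unfold Crosses at h'
  obtain ⟨⟨x, hx⟩, -⟩ := h'
  refine card_lt_card ((ssubset_iff_of_subset sdiff_subset).mpr ?_)
  exact ⟨x, (mem_inter.mp hx).1, fun hmem => (mem_sdiff.mp hmem).2 (mem_inter.mp hx).2⟩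

/-- The function `f(S)` from the Closest Point Process. -/
noncomputable def fval (z : Finset α → ℝ) (S : Finset α) : ℝ :=
  if S.card ≤ 1 then ∑ p ∈ S, ell z p
  else if 0 < ∑ E ∈ crossers S, z E then
    (∑ E ∈ (crossers S).attach, z E.1 * fval z (S \ E.1)) / (∑ E ∈ crossers S, z E)
  else 0
termination_by S.card
decreasing_by exact card_sdiff_lt_of_mem_crossers E.2

/-- A weight vector is nondegenerate if every `S` with `|S| ≥ 2` has positive crossing weight. -/
def Nondeg (z : Finset α → ℝ) : Prop :=
  ∀ S : Finset α, 2 ≤ S.card → 0 < ∑ E ∈ crossers S, z E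

/-- The partial derivative `∂f(S)/∂z_T`. -/
noncomputable def pderivf (S T : Finset α) (z : Finset α → ℝ) : ℝ :=
  fderiv ℝ (fun w : Finset α → ℝ => fval w S) z (Pi.single T 1)

/-- The pseudo-derivative `∂̂f(S)/∂̂z_T`. -/
noncomputable def pdhat (z : Finset α → ℝ) (S T : Finset α) : ℝ :=
  if S ⊆ T then 1
  else if S ∩ T = ∅ then 0
  else (∑ E ∈ (crossers S).attach, z E.1 * pdhat z (S \ E.1) T
        + fval z (S \ T) - ∑ E ∈ univ.filter (fun E => S ⊆ E), z E)
       / (∑ E ∈ crossers S, z E)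
termination_by S.card
decreasing_by exact card_sdiff_lt_of_mem_crossers E.2

/-- The `m`-th harmonic number. -/
noncomputable def harm (m : ℕ) : ℝ := ∑ j ∈ Finset.range m, 1 / ((j : ℝ) + 1)

lemma mem_crossers' {E S : Finset α} : E ∈ crossers S ↔ Crosses E S := by
  simp [crossers]

lemma fval_eq2 (z : Finset α → ℝ) (S : Finset α) (h2 : 2 ≤ S.card)
    (hW : 0 < ∑ E ∈ crossers S, z E) :
    fval z S = (∑ E ∈ crossers S, z E * fval z (S \ E)) / (∑ E ∈ crossers S, z E) := by
  rw [fval, if_neg (by omega), if_pos hW, Finset.sum_attach (crossers S) (fun E => z E * fval z (S \ E))]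

lemma fval_singleton (z : Finset α → ℝ) (q : α) : fval z {q} = ell z q := by
  rw [fval]
  simp

lemma crossers_eq_empty {S : Finset α} (h : S.card ≤ 1) : crossers S = ∅ := by
  rw [Finset.eq_empty_iff_forall_notMem]
  intro E hE
  rw [mem_crossers'] at hE
  obtain ⟨⟨x, hx⟩, ⟨y, hy⟩⟩ := hE
  rw [mem_inter] at hx
  rw [mem_sdiff] at hy
  have hxy : x ≠ y := fun h => hy.2 (h ▸ hx.2)
  have := Finset.one_lt_card.mpr ⟨x, hx.1, y, hy.1, hxy⟩
  omega

lemma fval_lb (z : Finset α → ℝ) (hz : ∀ E : Finset α, 0 ≤ z E) (hnd : Nondeg z) (p : α) :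
    ∀ n (S : Finset α), S.card ≤ n → S.Nonempty → (∀ q ∈ S, ell z p ≤ ell z q) →
      ell z p ≤ fval z S := by
  intro n
  induction n with
  | zero =>
    intro S hc hne _
    exact absurd (Finset.card_eq_zero.mp (Nat.le_zero.mp hc)) hne.ne_empty
  | succ n ih =>
    intro S hc hne hmin
    by_cases h1 : S.card ≤ 1
    · have : S.card = 1 := by
        have := Finset.card_pos.mpr hne; omega
      obtain ⟨q, hq⟩ := Finset.card_eq_one.mp this
      subst hq
      rw [fval_singleton]
      exact hmin q (mem_singleton_self q)
    · have h2 : 2 ≤ S.card := by omega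
      have hW := hnd S h2
      rw [fval_eq2 z S h2 hW, le_div_iff₀ hW]
      calc ell z p * ∑ E ∈ crossers S, z E
          = ∑ E ∈ crossers S, z E * ell z p := by rw [Finset.mul_sum]; simp [mul_comm]
        _ ≤ ∑ E ∈ crossers S, z E * fval z (S \ E) := by
            refine Finset.sum_le_sum fun E hE => ?_
            refine mul_le_mul_of_nonneg_left ?_ (hz E)
            have hlt := card_sdiff_lt_of_mem_crossers hE
            have hne' : (S \ E).Nonempty := (mem_crossers'.mp hE).2
            exact ih (S \ E) (by omega) hne' (fun q hq => hmin q (mem_sdiff.mp hq).1)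

lemma crossers_mono {S : Finset α} {p : α} :
    crossers (S \ {p}) ⊆ crossers S := by
  intro E hE
  rw [mem_crossers'] at hE ⊢
  obtain ⟨⟨x, hx⟩, ⟨y, hy⟩⟩ := hE
  rw [mem_inter, mem_sdiff] at hx
  rw [mem_sdiff, mem_sdiff] at hy
  exact ⟨⟨x, mem_inter.mpr ⟨hx.1.1, hx.2⟩⟩, ⟨y, mem_sdiff.mpr ⟨hy.1.1, hy.2⟩⟩⟩

lemma fval_step (z : Finset α → ℝ) (hz : ∀ E : Finset α, 0 ≤ z E) (hnd : Nondeg z) :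
    ∀ n (S : Finset α), S.card ≤ n → 2 ≤ S.card → ∀ p, p ∈ S →
      (∀ q ∈ S, ell z p ≤ ell z q) → fval z S ≤ fval z (S \ {p}) := by
  intro n
  induction n with
  | zero => intro S hc h2 _ _ _; omega
  | succ n ih =>
    intro S hc h2 p hp hmin
    set S' := S \ {p} with hS'
    have hW := hnd S h2
    have hc' : S'.card = S.card - 1 := by
      rw [hS', card_sdiff_of_subset (singleton_subset_iff.mpr hp), card_singleton]
    have hS'ne : S'.Nonempty := Finset.card_pos.mp (by omega)
    have hmin' : ∀ q ∈ S', ell z p ≤ ell z q := fun q hq => hmin q (mem_sdiff.mp hq).1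
    have hlbS' : ell z p ≤ fval z S' := fval_lb z hz hnd p n S' (by omega) hS'ne hmin'
    have key : ∀ E ∈ crossers S, z E * fval z (S \ E) ≤
        z E * (if E ∈ crossers S' then fval z (S' \ E) else fval z S') := by
      intro E hE
      refine mul_le_mul_of_nonneg_left ?_ (hz E)
      obtain ⟨hxne, hyne⟩ := mem_crossers'.mp hE
      by_cases hE' : E ∈ crossers S'
      · rw [if_pos hE']
        by_cases hpE : p ∈ E
        · have heq : S' \ E = S \ E := by
            rw [hS', sdiff_sdiff_comm, Finset.sdiff_singleton_eq_erase,
              Finset.erase_eq_of_notMem (fun h => (mem_sdiff.mp h).2 hpE)]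
          rw [heq]
        · obtain ⟨y, hy⟩ := (mem_crossers'.mp hE').2
          rw [hS', mem_sdiff, mem_sdiff, mem_singleton] at hy
          have hpSE : p ∈ S \ E := mem_sdiff.mpr ⟨hp, hpE⟩
          have hySE : y ∈ S \ E := mem_sdiff.mpr ⟨hy.1.1, hy.2⟩
          have h2' : 2 ≤ (S \ E).card :=
            Finset.one_lt_card.mpr ⟨p, hpSE, y, hySE, fun h => hy.1.2 h.symm⟩
          have hlt := card_sdiff_lt_of_mem_crossers hE
          have := ih (S \ E) (by omega) h2' p hpSE (fun q hq => hmin q (mem_sdiff.mp hq).1)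
          rwa [sdiff_sdiff_comm] at this
      · rw [if_neg hE']
        rw [mem_crossers'] at hE'
        unfold Crosses at hE'
        push_neg at hE'
        by_cases hint : (S' ∩ E).Nonempty
        · have hsub : S' ⊆ E := by
            have h0 := hE' hint
            rw [Finset.sdiff_eq_empty_iff_subset] at h0
            exact h0
          have hall : ∀ a ∈ S \ E, a = p := by
            intro a ha
            rw [mem_sdiff] at ha
            by_contra hne
            exact ha.2 (hsub (mem_sdiff.mpr ⟨ha.1, by simp [hne]⟩))
          obtain ⟨w, hw⟩ := hyne
          have heq : S \ E = {p} := Finset.eq_singleton_iff_unique_mem.mpr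
            ⟨hall w hw ▸ hw, hall⟩
          rw [heq, fval_singleton]
          exact hlbS'
        · rw [Finset.not_nonempty_iff_eq_empty] at hint
          have hpE : p ∈ E := by
            obtain ⟨x, hx⟩ := hxne
            rw [mem_inter] at hx
            by_contra hpE
            have hxp : x = p := by
              by_contra hxp
              have : x ∈ S' ∩ E := mem_inter.mpr ⟨mem_sdiff.mpr ⟨hx.1, by simp [hxp]⟩, hx.2⟩
              simp [hint] at this
            exact hpE (hxp ▸ hx.2)
          have heq : S \ E = S' := by
            ext a
            rw [hS', mem_sdiff, mem_sdiff, mem_singleton]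
            constructor
            · exact fun ha => ⟨ha.1, fun h => ha.2 (h ▸ hpE)⟩
            · intro ha
              refine ⟨ha.1, fun haE => ?_⟩
              have : a ∈ S' ∩ E := mem_inter.mpr ⟨mem_sdiff.mpr ⟨ha.1, by simp [ha.2]⟩, haE⟩
              simp [hint] at this
          rw [heq]
    have hsum : ∑ E ∈ crossers S,
        z E * (if E ∈ crossers S' then fval z (S' \ E) else fval z S')
        = (∑ E ∈ crossers S, z E) * fval z S' := by
      rw [← Finset.sum_sdiff (crossers_mono (S := S) (p := p)),
        ← Finset.sum_sdiff (crossers_mono (S := S) (p := p)) (f := z)]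
      have h1 : ∑ E ∈ crossers S', z E *
          (if E ∈ crossers S' then fval z (S' \ E) else fval z S')
          = (∑ E ∈ crossers S', z E) * fval z S' := by
        rw [Finset.sum_congr rfl (fun E hE => by rw [if_pos hE])]
        by_cases h2' : 2 ≤ S'.card
        · have hW' := hnd S' h2'
          rw [fval_eq2 z S' h2' hW', mul_div_cancel₀ _ (ne_of_gt hW')]
        · rw [crossers_eq_empty (by omega)]
          simp
      have h2'' : ∑ E ∈ crossers S \ crossers S', z E *
          (if E ∈ crossers S' then fval z (S' \ E) else fval z S')
          = (∑ E ∈ crossers S \ crossers S', z E) * fval z S' := by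
        rw [Finset.sum_mul]
        refine Finset.sum_congr rfl fun E hE => ?_
        rw [if_neg (mem_sdiff.mp hE).2]
      rw [h1, h2'', ← add_mul]
    rw [fval_eq2 z S h2 hW, div_le_iff₀ hW]
    calc ∑ E ∈ crossers S, z E * fval z (S \ E)
        ≤ ∑ E ∈ crossers S, z E *
            (if E ∈ crossers S' then fval z (S' \ E) else fval z S') :=
          Finset.sum_le_sum key
      _ = (∑ E ∈ crossers S, z E) * fval z S' := hsum
      _ = fval z S' * ∑ E ∈ crossers S, z E := mul_comm _ _

/-- deleting a point of minimum norm does not decrease `f`. -/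
theorem stmt11 {α : Type*} [Fintype α] [DecidableEq α]
    (z : Finset α → ℝ) (hz : ∀ E : Finset α, 0 ≤ z E) (hnd : Nondeg z)
    (S : Finset α) (hScard : 2 ≤ S.card) (p : α) (hp : p ∈ S)
    (hmin : ∀ q ∈ S, ell z p ≤ ell z q) :
    ell z p ≤ fval z S ∧ fval z S ≤ fval z (S \ {p}) := by
  refine ⟨fval_lb z hz hnd p S.card S le_rfl (Finset.card_pos.mp (by omega)) hmin, ?_⟩
  exact fval_step z hz hnd S.card S le_rfl hScard p hp hmin
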